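/- Let x_1,…,x_t be elements of the graph group G_F such that x_i ∨ x_j is finite for all i,j ∈ {1,…,t}. Then x_1 ∨ x_2 ∨ ⋯ ∨ x_t is finite. -/

import Mathlib

open Pointwise

namespace GraphGroupPaper

/-- The set of commutator relators: `gᵢ` and `gⱼ` commute for every pair of distinct
`i, j` with `{i,j} ∉ F`. -/
def Rels (k : ℕ) (F : Set (Sym2 (Fin k))) : Set (FreeGroup (Fin k)) :=
  {w | ∃ i j : Fin k, i ≠ j ∧ s(i, j) ∉ F ∧
      w = FreeGroup.of i * FreeGroup.of j * (FreeGroup.of i)⁻¹ * (FreeGroup.of j)⁻¹}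

/-- The graph group `G_F` with generators `g₁, …, g_k` and relations `gᵢgⱼ = gⱼgᵢ`
for all distinct `i, j` with `{i,j} ∉ F`. -/
abbrev Grp (k : ℕ) (F : Set (Sym2 (Fin k))) := PresentedGroup (Rels k F)

/-- The generator `gᵢ` of the graph group. -/
def gen (k : ℕ) (F : Set (Sym2 (Fin k))) (i : Fin k) : Grp k F :=
  PresentedGroup.of i

/-- The group element corresponding to a symbol: `(i, true)` stands for `gᵢ`,
`(i, false)` stands for `gᵢ⁻¹`. -/
def sym (k : ℕ) (F : Set (Sym2 (Fin k))) (α : Fin k × Bool) : Grp k F :=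
  if α.2 then gen k F α.1 else (gen k F α.1)⁻¹

/-- The product of the word `l` of symbols, as an element of the graph group. -/
def wordProd (k : ℕ) (F : Set (Sym2 (Fin k))) (l : List (Fin k × Bool)) : Grp k F :=
  (l.map (sym k F)).prod

/-- `|x|` : the length of a shortest word in the symbols representing `x`. -/
noncomputable def len {k : ℕ} {F : Set (Sym2 (Fin k))} (x : Grp k F) : ℕ :=
  sInf {n | ∃ l : List (Fin k × Bool), wordProd k F l = x ∧ l.length = n}

/-- The partial order on `G_F`:  `x ≤ y` iff `|y| = |x| + |x⁻¹y|`. -/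
def le {k : ℕ} {F : Set (Sym2 (Fin k))} (x y : Grp k F) : Prop :=
  len y = len x + len (x⁻¹ * y)

/-- `m` is the meet `x ∧ y` (greatest lower bound w.r.t. `le`). -/
def IsMeet {k : ℕ} {F : Set (Sym2 (Fin k))} (x y m : Grp k F) : Prop :=
  le m x ∧ le m y ∧ ∀ w, le w x → le w y → le w m

/-- `j` is the (finite) join `x ∨ y` (least upper bound w.r.t. `le`);
`x ∨ y` is finite iff such a `j` exists. -/
def IsJoin {k : ℕ} {F : Set (Sym2 (Fin k))} (x y j : Grp k F) : Prop :=
  le x j ∧ le y j ∧ ∀ w, le x w → le y w → le j w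

/-- `j` is the (finite) join of the set `S`. -/
def IsJoinSet {k : ℕ} {F : Set (Sym2 (Fin k))} (S : Set (Grp k F)) (j : Grp k F) : Prop :=
  (∀ s ∈ S, le s j) ∧ ∀ w, (∀ s ∈ S, le s w) → le j w

/-- `y` is a segment of `a` if `a = x·y·z` for some `x, z`. -/
def Segment {k : ℕ} {F : Set (Sym2 (Fin k))} (y a : Grp k F) : Prop :=
  ∃ x z, a = x * y * z ∧ len a = len x + len y + len z

/-- The left-invariant metric `dist(x,y) = |x⁻¹y|`. -/
noncomputable def dist {k : ℕ} {F : Set (Sym2 (Fin k))} (x y : Grp k F) : ℕ :=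
  len (x⁻¹ * y)

/-- A nonempty set `L` is convex if `x, z ∈ L` and `dist(x,y) + dist(y,z) = dist(x,z)`
imply `y ∈ L`. -/
def ConvexSet {k : ℕ} {F : Set (Sym2 (Fin k))} (L : Set (Grp k F)) : Prop :=
  L.Nonempty ∧ ∀ x z y : Grp k F, x ∈ L → z ∈ L →
    dist x y + dist y z = dist x z → y ∈ L

/-- An ideal: nonempty, downward closed, and closed under finite joins. -/
def IdealSet {k : ℕ} {F : Set (Sym2 (Fin k))} (I : Set (Grp k F)) : Prop :=
  I.Nonempty ∧ (∀ x ∈ I, ∀ y, le y x → y ∈ I) ∧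
    (∀ x ∈ I, ∀ y ∈ I, ∀ j, IsJoin x y j → j ∈ I)

/-- `H` is closed if both `H` and `H⁻¹` are ideals. -/
def ClosedSet {k : ℕ} {F : Set (Sym2 (Fin k))} (H : Set (Grp k F)) : Prop :=
  IdealSet H ∧ IdealSet H⁻¹

/-- `m` is a minimal element of `S` w.r.t. `le`. -/
def MinimalIn {k : ℕ} {F : Set (Sym2 (Fin k))} (S : Set (Grp k F)) (m : Grp k F) : Prop :=
  m ∈ S ∧ ∀ x ∈ S, le x m → x = m

/-- `l` is a reduced (i.e. shortest) word representing `x`. -/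
def MinWord {k : ℕ} {F : Set (Sym2 (Fin k))} (x : Grp k F) (l : List (Fin k × Bool)) : Prop :=
  wordProd k F l = x ∧ l.length = len x

open Classical in
/-- `#_α(x)`: the number of occurrences of the symbol `α` (not counting `α⁻¹`)
in a reduced word representing `x`. -/
noncomputable def symCount {k : ℕ} {F : Set (Sym2 (Fin k))} (α : Fin k × Bool)
    (x : Grp k F) : ℕ :=
  if h : ∃ l, MinWord x l then h.choose.count α else 0

/-- The symbol `α` occurs in `x`. -/
def Occurs {k : ℕ} {F : Set (Sym2 (Fin k))} (α : Fin k × Bool) (x : Grp k F) : Prop :=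
  0 < symCount α x

/-- `α` is a maximal symbol of `x`, i.e. `xα⁻¹ ≤ x`. -/
def MaxSym {k : ℕ} {F : Set (Sym2 (Fin k))} (α : Fin k × Bool) (x : Grp k F) : Prop :=
  le (x * (sym k F α)⁻¹) x

/-- A peak: an element with precisely one maximal symbol. -/
def IsPeak {k : ℕ} {F : Set (Sym2 (Fin k))} (p : Grp k F) : Prop :=
  ∃! α : Fin k × Bool, MaxSym α p

/-- An `α`-peak: a peak whose unique maximal symbol is `α`. -/
def AlphaPeak {k : ℕ} {F : Set (Sym2 (Fin k))} (α : Fin k × Bool) (p : Grp k F) : Prop :=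
  MaxSym α p ∧ ∀ β, MaxSym β p → β = α

/-- The set of generator indices occurring in `b`. -/
def Support {k : ℕ} {F : Set (Sym2 (Fin k))} (b : Grp k F) : Set (Fin k) :=
  {i | Occurs (i, true) b ∨ Occurs (i, false) b}

/-- `b` is connected: the generators occurring in `b` induce a connected subgraph of
the graph `([k], F)`. -/
def Conn {k : ℕ} {F : Set (Sym2 (Fin k))} (b : Grp k F) : Prop :=
  (SimpleGraph.induce (Support b) (SimpleGraph.fromEdgeSet F)).Connected

/-- `b` is cyclically reduced: `b ∧ b⁻¹ = 1`. -/
def CycRed {k : ℕ} {F : Set (Sym2 (Fin k))} (b : Grp k F) : Prop :=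
  IsMeet b b⁻¹ 1

section Aux
variable {k : ℕ} {F : Set (Sym2 (Fin k))}

def Nbr (F : Set (Sym2 (Fin k))) (i j : Fin k) : Prop := i ≠ j ∧ s(i, j) ∈ F

lemma Nbr.symm {i j : Fin k} (h : Nbr F i j) : Nbr F j i :=
  ⟨h.1.symm, by rw [Sym2.eq_swap]; exact h.2⟩

def Piling (k : ℕ) := Fin k → List (Option Bool)

def emptyP (k : ℕ) : Piling k := fun _ => []

def cancels (P : Piling k) (α : Fin k × Bool) : Prop :=
  (P α.1).head? = some (some (!α.2))

open Classical in
noncomputable def push (F : Set (Sym2 (Fin k))) (P : Piling k) (α : Fin k × Bool) :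
    Piling k :=
  fun j =>
    if cancels P α then
      (if j = α.1 ∨ Nbr F α.1 j then (P j).tail else P j)
    else
      (if j = α.1 then some α.2 :: P j else if Nbr F α.1 j then none :: P j else P j)

lemma push_self_cancel {P : Piling k} {α} (h : cancels P α) :
    push F P α α.1 = (P α.1).tail := by simp [push, h]

lemma push_nbr_cancel {P : Piling k} {α} {j} (h : cancels P α) (hn : Nbr F α.1 j) :
    push F P α j = (P j).tail := by simp [push, h, hn]

lemma push_cancel_cases {P : Piling k} {α} {j} (h : cancels P α) (hj : j = α.1 ∨ Nbr F α.1 j) :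
    push F P α j = (P j).tail := by simp [push, h, hj]

lemma push_self_noncancel {P : Piling k} {α} (h : ¬ cancels P α) :
    push F P α α.1 = some α.2 :: P α.1 := by simp [push, h]

lemma push_nbr_noncancel {P : Piling k} {α} {j} (h : ¬ cancels P α) (hj : j ≠ α.1)
    (hn : Nbr F α.1 j) : push F P α j = none :: P j := by simp [push, h, hj, hn]

lemma push_untouched {P : Piling k} {α} {j} (hj : j ≠ α.1) (hn : ¬ Nbr F α.1 j) :
    push F P α j = P j := by
  by_cases h : cancels P α <;> simp [push, h, hj, hn]

lemma cancels_push_untouched {P : Piling k} {α β} (hj : β.1 ≠ α.1) (hn : ¬ Nbr F α.1 β.1) :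
    cancels (push F P α) β ↔ cancels P β := by
  unfold cancels; rw [push_untouched hj hn]

def NoOpp : Option Bool → Option Bool → Prop := fun u v => ∀ b : Bool, u = some b → v ≠ some !b

def GoodP (F : Set (Sym2 (Fin k))) (P : Piling k) : Prop :=
  (∀ i, (P i).Chain' NoOpp) ∧
  ∀ i b, (P i).head? = some (some b) → ∀ j, Nbr F i j → (P j).head? = some none

lemma good_empty : GoodP F (emptyP k) := by
  constructor
  · intro i; simp [emptyP, List.Chain', List.isChain_nil]
  · intro i b h; simp [emptyP] at h

lemma cancels_iff {P : Piling k} {α} : cancels P α ↔ (P α.1).head? = some (some (!α.2)) :=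
  Iff.rfl

lemma exists_cons_of_cancels {P : Piling k} {α} (h : cancels P α) :
    ∃ t, P α.1 = some (!α.2) :: t := by
  unfold cancels at h
  cases hl : P α.1 with
  | nil => rw [hl] at h; simp at h
  | cons a t => rw [hl] at h; simp at h; exact ⟨t, by rw [h]⟩

lemma good_push_noncancel {P : Piling k} {α} (hg : GoodP F P) (h : ¬ cancels P α) :
    GoodP F (push F P α) := by
  obtain ⟨h1, h2⟩ := hg
  constructor
  · intro m
    by_cases hm : m = α.1
    · subst hm
      rw [push_self_noncancel h, List.Chain', List.isChain_cons]
      refine ⟨?_, h1 _⟩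
      intro y hy b hb hc
      injection hb with hb; subst hb
      exact h (by unfold cancels; rw [hc] at hy; exact hy)
    · by_cases hn : Nbr F α.1 m
      · rw [push_nbr_noncancel h hm hn, List.Chain', List.isChain_cons]
        refine ⟨?_, h1 _⟩
        intro y _ b hb
        cases hb
      · rw [push_untouched hm hn]; exact h1 m
  · intro m b hm j hmj
    have hjm1 : j ≠ α.1 ∨ True := Or.inr trivial
    by_cases hmi : m = α.1
    · subst hmi
      have hji : j ≠ α.1 := hmj.1.symm
      rw [push_nbr_noncancel h hji hmj]; rfl
    · by_cases hni : Nbr F α.1 m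
      · rw [push_nbr_noncancel h hmi hni] at hm; simp at hm
      · rw [push_untouched hmi hni] at hm
        have old := h2 m b hm j hmj
        by_cases hji : j = α.1
        · subst hji
          exact absurd (Nbr.symm hmj) hni
        · by_cases hjn : Nbr F α.1 j
          · rw [push_nbr_noncancel h hji hjn]; rfl
          · rw [push_untouched hji hjn]; exact old

lemma push_push_cancel {P : Piling k} {i : Fin k} {ε : Bool} (hg : GoodP F P) :
    push F (push F P (i, ε)) (i, !ε) = P := by
  by_cases h : cancels P (i, ε)
  · obtain ⟨t, ht⟩ := exists_cons_of_cancels h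
    have hQi : push F P (i, ε) i = t := by
      have := push_self_cancel (F := F) h
      rw [this, ht]; rfl
    have hnc : ¬ cancels (push F P (i, ε)) (i, !ε) := by
      unfold cancels
      rw [hQi, Bool.not_not]
      intro hc
      have hch := hg.1 i
      rw [ht, List.Chain', List.isChain_cons] at hch
      have hy : (some ε : Option Bool) ∈ t.head? := by rw [hc]; rfl
      exact hch.1 _ hy (!ε) rfl (by rw [Bool.not_not])
    funext j
    by_cases hj : j = i
    · subst hj
      rw [push_self_noncancel hnc, hQi, ht]
    · by_cases hn : Nbr F i j
      · rw [push_nbr_noncancel hnc hj hn, push_nbr_cancel h hn]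
        have hh := hg.2 i (!ε) (by rw [ht]; rfl) j hn
        cases hl : P j with
        | nil => rw [hl] at hh; simp at hh
        | cons a u =>
          rw [hl] at hh; simp at hh; rw [hh]; rfl
      · rw [push_untouched hj hn, push_untouched hj hn]
  · have hc2 : cancels (push F P (i, ε)) (i, !ε) := by
      unfold cancels
      rw [push_self_noncancel h, Bool.not_not]; rfl
    funext j
    by_cases hj : j = i
    · subst hj
      rw [push_cancel_cases hc2 (Or.inl rfl), push_self_noncancel h]
      rfl
    · by_cases hn : Nbr F i j
      · rw [push_cancel_cases hc2 (Or.inr hn), push_nbr_noncancel h hj hn]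
        rfl
      · rw [push_untouched hj hn, push_untouched hj hn]

lemma push_untouched' {P : Piling k} {α} {m} (h : ¬(m = α.1 ∨ Nbr F α.1 m)) :
    push F P α m = P m :=
  push_untouched (not_or.mp h).1 (not_or.mp h).2

lemma cons_none_tail {l : List (Option Bool)} (h : l.head? = some none) :
    (none : Option Bool) :: l.tail = l := by
  cases l with
  | nil => simp at h
  | cons a u => simp at h; rw [h]; rfl

lemma push_comm {P : Piling k} {i j : Fin k} {ε δ : Bool} (hg : GoodP F P)
    (hij : i ≠ j) (hn : ¬ Nbr F i j) :
    push F (push F P (i, ε)) (j, δ) = push F (push F P (j, δ)) (i, ε) := by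
  have hnji : ¬ Nbr F j i := fun hh => hn hh.symm
  have hci : cancels (push F P (j, δ)) (i, ε) ↔ cancels P (i, ε) :=
    cancels_push_untouched hij hnji
  have hcj : cancels (push F P (i, ε)) (j, δ) ↔ cancels P (j, δ) :=
    cancels_push_untouched (Ne.symm hij) hn
  funext m
  by_cases ci : cancels P (i, ε) <;> by_cases cj : cancels P (j, δ) <;>
    by_cases Ai : m = i ∨ Nbr F i m <;> by_cases Aj : m = j ∨ Nbr F j m
  -- ci cj Ai Aj
  · rw [push_cancel_cases (hcj.mpr cj) Aj, push_cancel_cases ci Ai,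
      push_cancel_cases (hci.mpr ci) Ai, push_cancel_cases cj Aj]
  -- ci cj Ai ¬Aj
  · rw [push_untouched' Aj, push_cancel_cases ci Ai,
      push_cancel_cases (hci.mpr ci) Ai, push_untouched' Aj]
  -- ci cj ¬Ai Aj
  · rw [push_cancel_cases (hcj.mpr cj) Aj, push_untouched' Ai,
      push_untouched' Ai, push_cancel_cases cj Aj]
  -- ci cj ¬Ai ¬Aj
  · rw [push_untouched' Aj, push_untouched' Ai, push_untouched' Ai, push_untouched' Aj]
  -- ci ¬cj Ai Aj : m ∈ Nbr i ∩ Nbr j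
  · have hmi : Nbr F i m := by
      rcases Ai with h1 | h1
      · subst h1; rcases Aj with h2 | h2
        · exact absurd h2 hij
        · exact absurd h2 hnji
      · exact h1
    have hmj : Nbr F j m := by
      rcases Aj with h2 | h2
      · exfalso; subst h2; exact hn hmi
      · exact h2
    have hmnei : m ≠ i := fun hh => hmi.1 hh.symm
    have hmnej : m ≠ j := fun hh => hmj.1 hh.symm
    rw [push_nbr_noncancel (hcj.not.mpr cj) hmnej hmj, push_cancel_cases ci (Or.inr hmi),
      push_cancel_cases (hci.mpr ci) (Or.inr hmi), push_nbr_noncancel cj hmnej hmj]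
    have hPm : (P m).head? = some none := hg.2 i (!ε) ci m hmi
    simp only [List.tail_cons]
    rw [cons_none_tail hPm]
  -- ci ¬cj Ai ¬Aj
  · rw [push_untouched' Aj, push_cancel_cases ci Ai,
      push_cancel_cases (hci.mpr ci) Ai, push_untouched' Aj]
  -- ci ¬cj ¬Ai Aj
  · rcases Aj with h2 | h2
    · subst h2
      rw [push_self_noncancel (hcj.not.mpr cj), push_untouched' Ai,
        push_untouched' Ai, push_self_noncancel cj]
    · have hmnej : m ≠ j := fun hh => h2.1 hh.symm
      rw [push_nbr_noncancel (hcj.not.mpr cj) hmnej h2, push_untouched' Ai,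
        push_untouched' Ai, push_nbr_noncancel cj hmnej h2]
  -- ci ¬cj ¬Ai ¬Aj
  · rw [push_untouched' Aj, push_untouched' Ai, push_untouched' Ai, push_untouched' Aj]
  -- ¬ci cj Ai Aj : mirror of (ci ¬cj Ai Aj)
  · have hmi : Nbr F i m := by
      rcases Ai with h1 | h1
      · subst h1; rcases Aj with h2 | h2
        · exact absurd h2 hij
        · exact absurd h2 hnji
      · exact h1
    have hmj : Nbr F j m := by
      rcases Aj with h2 | h2
      · exfalso; subst h2; exact hn hmi
      · exact h2
    have hmnei : m ≠ i := fun hh => hmi.1 hh.symm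
    have hmnej : m ≠ j := fun hh => hmj.1 hh.symm
    rw [push_cancel_cases (hcj.mpr cj) (Or.inr hmj), push_nbr_noncancel ci hmnei hmi,
      push_nbr_noncancel (hci.not.mpr ci) hmnei hmi, push_cancel_cases cj (Or.inr hmj)]
    have hPm : (P m).head? = some none := hg.2 j (!δ) cj m hmj
    simp only [List.tail_cons]
    rw [cons_none_tail hPm]
  -- ¬ci cj Ai ¬Aj
  · rcases Ai with h1 | h1
    · subst h1
      rw [push_untouched' Aj, push_self_noncancel ci,
        push_self_noncancel (hci.not.mpr ci), push_untouched' Aj]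
    · have hmnei : m ≠ i := fun hh => h1.1 hh.symm
      rw [push_untouched' Aj, push_nbr_noncancel ci hmnei h1,
        push_nbr_noncancel (hci.not.mpr ci) hmnei h1, push_untouched' Aj]
  -- ¬ci cj ¬Ai Aj
  · rw [push_cancel_cases (hcj.mpr cj) Aj, push_untouched' Ai,
      push_untouched' Ai, push_cancel_cases cj Aj]
  -- ¬ci cj ¬Ai ¬Aj
  · rw [push_untouched' Aj, push_untouched' Ai, push_untouched' Ai, push_untouched' Aj]
  -- ¬ci ¬cj Ai Aj
  · have hmi : Nbr F i m := by
      rcases Ai with h1 | h1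
      · subst h1; rcases Aj with h2 | h2
        · exact absurd h2 hij
        · exact absurd h2 hnji
      · exact h1
    have hmj : Nbr F j m := by
      rcases Aj with h2 | h2
      · exfalso; subst h2; exact hn hmi
      · exact h2
    have hmnei : m ≠ i := fun hh => hmi.1 hh.symm
    have hmnej : m ≠ j := fun hh => hmj.1 hh.symm
    rw [push_nbr_noncancel (hcj.not.mpr cj) hmnej hmj, push_nbr_noncancel ci hmnei hmi,
      push_nbr_noncancel (hci.not.mpr ci) hmnei hmi, push_nbr_noncancel cj hmnej hmj]
  -- ¬ci ¬cj Ai ¬Aj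
  · rcases Ai with h1 | h1
    · subst h1
      rw [push_untouched' Aj, push_self_noncancel ci,
        push_self_noncancel (hci.not.mpr ci), push_untouched' Aj]
    · have hmnei : m ≠ i := fun hh => h1.1 hh.symm
      rw [push_untouched' Aj, push_nbr_noncancel ci hmnei h1,
        push_nbr_noncancel (hci.not.mpr ci) hmnei h1, push_untouched' Aj]
  -- ¬ci ¬cj ¬Ai Aj
  · rcases Aj with h2 | h2
    · subst h2
      rw [push_self_noncancel (hcj.not.mpr cj), push_untouched' Ai,
        push_untouched' Ai, push_self_noncancel cj]
    · have hmnej : m ≠ j := fun hh => h2.1 hh.symm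
      rw [push_nbr_noncancel (hcj.not.mpr cj) hmnej h2, push_untouched' Ai,
        push_untouched' Ai, push_nbr_noncancel cj hmnej h2]
  -- ¬ci ¬cj ¬Ai ¬Aj
  · rw [push_untouched' Aj, push_untouched' Ai, push_untouched' Ai, push_untouched' Aj]

/-- Cancel-free words over a base piling. -/
def CF (F : Set (Sym2 (Fin k))) : List (Fin k × Bool) → Piling k → Prop
  | [], _ => True
  | α :: l, P => ¬ cancels P α ∧ CF F l (push F P α)

noncomputable def foldlP (F : Set (Sym2 (Fin k))) (P : Piling k)
    (l : List (Fin k × Bool)) : Piling k :=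
  l.foldl (push F) P

@[simp] lemma foldlP_nil {P : Piling k} : foldlP F P [] = P := rfl

@[simp] lemma foldlP_cons {P : Piling k} {α} {l} :
    foldlP F P (α :: l) = foldlP F (push F P α) l := rfl

lemma foldlP_append {P : Piling k} {l₁ l₂} :
    foldlP F P (l₁ ++ l₂) = foldlP F (foldlP F P l₁) l₂ :=
  List.foldl_append ..

@[simp] lemma CF_nil {P : Piling k} : CF F [] P := trivial

lemma CF_cons {P : Piling k} {α} {l} :
    CF F (α :: l) P ↔ ¬ cancels P α ∧ CF F l (push F P α) := Iff.rfl

lemma CF_append {P : Piling k} {l₁ l₂} :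
    CF F (l₁ ++ l₂) P ↔ CF F l₁ P ∧ CF F l₂ (foldlP F P l₁) := by
  induction l₁ generalizing P with
  | nil => simp
  | cons α l ih => simp [CF_cons, ih, and_assoc]

lemma good_foldl {P : Piling k} {l} (hg : GoodP F P) (hcf : CF F l P) :
    GoodP F (foldlP F P l) := by
  induction l generalizing P with
  | nil => exact hg
  | cons α l ih =>
    rw [foldlP_cons]
    exact ih (good_push_noncancel hg hcf.1) hcf.2

lemma lemD {l : List (Fin k × Bool)} (hcf : CF F l (emptyP k)) {i : Fin k} {c : Bool}
    (hh : ((foldlP F (emptyP k) l) i).head? = some (some c)) :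
    ∃ u v, l = u ++ (i, c) :: v ∧ ∀ β ∈ v, β.1 ≠ i ∧ ¬ Nbr F i β.1 := by
  induction l using List.reverseRecOn with
  | nil => simp [emptyP] at hh
  | append_singleton l β ih =>
    rw [CF_append] at hcf
    have hnc : ¬ cancels (foldlP F (emptyP k) l) β := hcf.2.1
    rw [foldlP_append] at hh
    set Q := foldlP F (emptyP k) l with hQ
    by_cases hbi : β.1 = i
    · -- pushed bead on stack i
      have : (foldlP F Q [β] i).head? = some (some β.2) := by
        simp only [foldlP_cons, foldlP_nil]
        rw [← hbi, push_self_noncancel hnc]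
        rfl
      rw [this] at hh
      have hc : β.2 = c := by injection hh with hh; injection hh
      refine ⟨l, [], ?_, by simp⟩
      have : β = (i, c) := by
        rw [← hbi, ← hc]
      rw [this]
    · by_cases hbn : Nbr F β.1 i
      · have : (foldlP F Q [β] i).head? = some none := by
          simp only [foldlP_cons, foldlP_nil]
          rw [push_nbr_noncancel hnc (Ne.symm hbi) hbn]
          rfl
        rw [this] at hh
        simp at hh
      · have : foldlP F Q [β] i = Q i := by
          simp only [foldlP_cons, foldlP_nil]
          exact push_untouched (Ne.symm hbi) hbn
        rw [this] at hh
        obtain ⟨u, v, hl, hv⟩ := ih hcf.1 hh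
        refine ⟨u, v ++ [β], by rw [hl]; simp, ?_⟩
        intro γ hγ
        rcases List.mem_append.mp hγ with hγ | hγ
        · exact hv γ hγ
        · rcases List.mem_singleton.mp hγ with rfl
          exact ⟨hbi, fun hh' => hbn hh'.symm⟩

lemma block_comm {i : Fin k} {c : Bool} :
    ∀ (v : List (Fin k × Bool)) (Q : Piling k),
      (∀ β ∈ v, β.1 ≠ i ∧ ¬ Nbr F i β.1) → GoodP F Q → ¬ cancels Q (i, c) →
      CF F v (push F Q (i, c)) →
      CF F v Q ∧ foldlP F (push F Q (i, c)) v = push F (foldlP F Q v) (i, c) ∧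
        ¬ cancels (foldlP F Q v) (i, c) := by
  intro v
  induction v with
  | nil => intro Q _ hg hnc hcf; exact ⟨trivial, rfl, hnc⟩
  | cons β v ih =>
    intro Q hv hg hnc hcf
    obtain ⟨hb1, hb2⟩ := hv β List.mem_cons_self
    have hb2' : ¬ Nbr F β.1 i := fun hh => hb2 hh.symm
    have hstack : push F Q (i, c) β.1 = Q β.1 := push_untouched hb1 hb2
    have hcan : cancels (push F Q (i, c)) β ↔ cancels Q β := by
      unfold cancels; rw [hstack]
    have hncβ : ¬ cancels Q β := fun hh => hcf.1 (hcan.mpr hh)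
    have hswap : push F (push F Q (i, c)) β = push F (push F Q β) (i, c) := by
      have := push_comm (P := Q) (i := i) (j := β.1) (ε := c) (δ := β.2) hg
        (fun hh => hb1 hh.symm) hb2
      simpa using this
    have hgβ : GoodP F (push F Q β) := good_push_noncancel hg hncβ
    have hnc' : ¬ cancels (push F Q β) (i, c) := by
      unfold cancels
      rw [push_untouched hb1.symm hb2']
      exact hnc
    have hcf' : CF F v (push F (push F Q β) (i, c)) := by
      rw [← hswap]; exact hcf.2
    obtain ⟨cf1, e1, nc1⟩ := ih (push F Q β)
      (fun γ hγ => hv γ (List.mem_cons_of_mem β hγ)) hgβ hnc' hcf'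
    refine ⟨⟨hncβ, cf1⟩, ?_, ?_⟩
    · rw [foldlP_cons, hswap, e1, foldlP_cons]
    · rw [foldlP_cons]; exact nc1

/-- Reachable pilings: images of cancel-free words. -/
def Reach (F : Set (Sym2 (Fin k))) : Set (Piling k) :=
  {P | ∃ l, CF F l (emptyP k) ∧ foldlP F (emptyP k) l = P}

lemma reach_empty : emptyP k ∈ Reach F := ⟨[], trivial, rfl⟩

lemma good_of_reach {P : Piling k} (h : P ∈ Reach F) : GoodP F P := by
  obtain ⟨l, hcf, rfl⟩ := h
  exact good_foldl good_empty hcf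

lemma reach_push {P : Piling k} (h : P ∈ Reach F) (α : Fin k × Bool) :
    push F P α ∈ Reach F := by
  obtain ⟨l, hcf, rfl⟩ := h
  by_cases hc : cancels (foldlP F (emptyP k) l) α
  · -- cancelling push: remove a letter
    obtain ⟨u, v, rfl, hv⟩ := lemD hcf (i := α.1) (c := !α.2) hc
    rw [CF_append, CF_cons] at hcf
    obtain ⟨hcfu, hncα, hcfv⟩ := hcf
    have hgu : GoodP F (foldlP F (emptyP k) u) := good_foldl good_empty hcfu
    obtain ⟨cf1, e1, nc1⟩ := block_comm v (foldlP F (emptyP k) u) hv hgu hncα hcfv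
    refine ⟨u ++ v, CF_append.mpr ⟨hcfu, cf1⟩, ?_⟩
    rw [foldlP_append]
    rw [foldlP_append, foldlP_cons] at *
    rw [e1]
    -- goal: foldl (emptyP) (u) ... : push (push R (i,!ε)) α = R where α = (α.1, α.2)
    have := push_push_cancel (F := F) (P := foldlP F (foldlP F (emptyP k) u) v)
      (i := α.1) (ε := !α.2) (good_foldl hgu cf1)
    rw [Bool.not_not] at this
    simpa using this.symm
  · exact ⟨l ++ [α], CF_append.mpr ⟨hcf, by exact ⟨hc, trivial⟩⟩, by
      rw [foldlP_append]; rfl⟩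

/-- Number of nonzero beads. -/
noncomputable def bc (P : Piling k) : ℕ :=
  ∑ i : Fin k, ((P i).countP fun o => o.isSome)

@[simp] lemma bc_empty : bc (emptyP k) = 0 := by simp [bc, emptyP]

lemma bc_push_noncancel {P : Piling k} {α} (h : ¬ cancels P α) :
    bc (push F P α) = bc P + 1 := by
  have key : ∀ j, ((push F P α j).countP fun o => o.isSome) =
      ((P j).countP fun o => o.isSome) + (if j = α.1 then 1 else 0) := by
    intro j
    by_cases hj : j = α.1
    · subst hj
      rw [push_self_noncancel h, List.countP_cons]
      simp
    · by_cases hnn : Nbr F α.1 j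
      · rw [push_nbr_noncancel h hj hnn, List.countP_cons]
        simp [hj]
      · rw [push_untouched hj hnn]
        simp [hj]
  unfold bc
  rw [Finset.sum_congr rfl (fun j _ => key j), Finset.sum_add_distrib]
  simp

lemma bc_push_cancel {P : Piling k} {α} (h : cancels P α) :
    bc (push F P α) + 1 ≤ bc P := by
  obtain ⟨t, ht⟩ := exists_cons_of_cancels h
  have key : ∀ j, ((push F P α j).countP fun o => o.isSome) + (if j = α.1 then 1 else 0) ≤
      ((P j).countP fun o => o.isSome) := by
    intro j
    by_cases hj : j = α.1
    · subst hj
      rw [push_self_cancel h, ht]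
      simp [List.countP_cons]
    · simp only [hj, if_neg, ite_false, Nat.add_zero]
      by_cases hnn : Nbr F α.1 j
      · rw [push_nbr_cancel h hnn]
        exact List.Sublist.countP_le (List.tail_sublist _)
      · rw [push_untouched hj hnn]
  have := Finset.sum_le_sum (fun j (_ : j ∈ Finset.univ) => key j)
  rw [Finset.sum_add_distrib] at this
  simpa [bc] using this

lemma bc_foldl_CF {P : Piling k} {l} (h : CF F l P) :
    bc (foldlP F P l) = bc P + l.length := by
  induction l generalizing P with
  | nil => simp
  | cons α l ih =>
    rw [foldlP_cons, ih h.2, bc_push_noncancel h.1, List.length_cons]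
    omega

/-! ### Words and length -/

@[simp] lemma wordProd_nil : wordProd k F [] = 1 := rfl

lemma wordProd_cons {α} {l} : wordProd k F (α :: l) = sym k F α * wordProd k F l := by
  simp [wordProd]

lemma wordProd_append {l₁ l₂} :
    wordProd k F (l₁ ++ l₂) = wordProd k F l₁ * wordProd k F l₂ := by
  simp [wordProd]

@[simp] lemma wordProd_singleton {α} : wordProd k F [α] = sym k F α := by
  simp [wordProd]

lemma exists_word (x : Grp k F) : ∃ l, wordProd k F l = x := by
  obtain ⟨g, rfl⟩ := PresentedGroup.mk_surjective (Rels k F) x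
  induction g using FreeGroup.induction_on with
  | C1 => exact ⟨[], by simp⟩
  | of i => exact ⟨[(i, true)], by simp [sym, gen]; rfl⟩
  | inv_of i _ => exact ⟨[(i, false)], by simp [sym, gen, map_inv]; rfl⟩
  | mul a b ha hb =>
    obtain ⟨la, hla⟩ := ha
    obtain ⟨lb, hlb⟩ := hb
    exact ⟨la ++ lb, by rw [wordProd_append, hla, hlb, map_mul]⟩

lemma exists_minWord (x : Grp k F) : ∃ l, wordProd k F l = x ∧ l.length = len x := by
  have h : {n | ∃ l, wordProd k F l = x ∧ l.length = n}.Nonempty := by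
    obtain ⟨l, hl⟩ := exists_word x
    exact ⟨l.length, l, hl, rfl⟩
  exact Nat.sInf_mem h

lemma len_le {l} {x : Grp k F} (h : wordProd k F l = x) : len x ≤ l.length :=
  Nat.sInf_le ⟨l, h, rfl⟩

@[simp] lemma len_one : len (1 : Grp k F) = 0 :=
  Nat.le_zero.mp (len_le (x := (1 : Grp k F)) (l := []) (by simp))

lemma eq_one_of_len {x : Grp k F} (h : len x = 0) : x = 1 := by
  obtain ⟨l, hw, hl⟩ := exists_minWord x
  rw [h, List.length_eq_zero_iff] at hl
  rw [hl] at hw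
  simpa using hw.symm

lemma len_mul_le (x y : Grp k F) : len (x * y) ≤ len x + len y := by
  obtain ⟨lx, hx, hlx⟩ := exists_minWord x
  obtain ⟨ly, hy, hly⟩ := exists_minWord y
  have : wordProd k F (lx ++ ly) = x * y := by rw [wordProd_append, hx, hy]
  have := len_le this
  simpa [hlx, hly] using this

def negL (α : Fin k × Bool) : Fin k × Bool := (α.1, !α.2)

lemma sym_negL {α} : sym k F (negL α) = (sym k F α)⁻¹ := by
  rcases α with ⟨i, b⟩
  cases b <;> simp [sym, negL]

lemma wordProd_inv (l : List (Fin k × Bool)) :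
    wordProd k F (l.reverse.map negL) = (wordProd k F l)⁻¹ := by
  induction l with
  | nil => simp
  | cons α l ih =>
    rw [wordProd_cons, List.reverse_cons, List.map_append, wordProd_append, ih]
    simp [sym_negL]

lemma len_inv_le (x : Grp k F) : len x⁻¹ ≤ len x := by
  obtain ⟨l, hw, hl⟩ := exists_minWord x
  have := len_le (x := x⁻¹) (l := l.reverse.map negL) (by rw [wordProd_inv, hw])
  simpa [hl] using this

@[simp] lemma len_inv (x : Grp k F) : len x⁻¹ = len x :=
  le_antisymm (len_inv_le x) (by simpa using len_inv_le x⁻¹)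

/-! ### The action of the graph group on reachable pilings -/

noncomputable def pushE (F : Set (Sym2 (Fin k))) (α : Fin k × Bool) :
    Equiv.Perm (Reach F) where
  toFun P := ⟨push F P.1 α, reach_push P.2 α⟩
  invFun P := ⟨push F P.1 (negL α), reach_push P.2 (negL α)⟩
  left_inv P := by
    apply Subtype.ext
    have := push_push_cancel (P := P.1) (i := α.1) (ε := α.2) (good_of_reach P.2)
    simpa [negL] using this
  right_inv P := by
    apply Subtype.ext
    have := push_push_cancel (P := P.1) (i := α.1) (ε := !α.2) (good_of_reach P.2)
    rw [Bool.not_not] at this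
    simpa [negL] using this

lemma pushE_apply {α} (P : Reach F) : ((pushE F α) P).1 = push F P.1 α := rfl

lemma pushE_comm {i j : Fin k} (hij : i ≠ j) (hF : s(i, j) ∉ F) (b c : Bool) :
    pushE F (i, b) * pushE F (j, c) = pushE F (j, c) * pushE F (i, b) := by
  have hn : ¬ Nbr F i j := fun h => hF h.2
  apply Equiv.ext
  intro P
  apply Subtype.ext
  simp only [Equiv.Perm.mul_apply, pushE_apply]
  exact (push_comm (good_of_reach P.2) hij hn).symm

noncomputable def Phi : Grp k F →* Equiv.Perm (Reach F) :=
  PresentedGroup.toGroup (f := fun i => pushE F (i, false)) (by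
    rintro r ⟨i, j, hij, hF, rfl⟩
    simp only [map_mul, map_inv, FreeGroup.lift_apply_of]
    rw [pushE_comm hij hF, mul_inv_cancel_right, mul_inv_cancel])

noncomputable def PiP (x : Grp k F) : Piling k :=
  ((Phi (F := F) x⁻¹) ⟨emptyP k, reach_empty⟩).1

lemma PiP_reach (x : Grp k F) : PiP x ∈ Reach F :=
  ((Phi (F := F) x⁻¹) ⟨emptyP k, reach_empty⟩).2

lemma good_PiP (x : Grp k F) : GoodP F (PiP x) := good_of_reach (PiP_reach x)

@[simp] lemma PiP_one : PiP (F := F) 1 = emptyP k := by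
  unfold PiP
  rw [inv_one, map_one]
  rfl

lemma Phi_gen (i : Fin k) : Phi (F := F) (gen k F i) = pushE F (i, false) := by
  unfold gen
  exact PresentedGroup.toGroup.of _

lemma Phi_symInv_apply (α : Fin k × Bool) (P : Reach F) :
    ((Phi (F := F) (sym k F α)⁻¹) P).1 = push F P.1 α := by
  rcases α with ⟨i, b⟩
  cases b
  · rw [show sym k F (i, false) = (gen k F i)⁻¹ from rfl, inv_inv, Phi_gen]
    rfl
  · rw [show sym k F (i, true) = gen k F i from rfl, map_inv, Phi_gen]
    have : (pushE F (i, false))⁻¹ P = (pushE F (i, false)).symm P := rfl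
    rw [this]
    rfl

lemma PiP_mul_sym (z : Grp k F) (α) : PiP (z * sym k F α) = push F (PiP z) α := by
  unfold PiP
  rw [mul_inv_rev, map_mul, Equiv.Perm.mul_apply]
  exact Phi_symInv_apply α _

lemma PiP_wordProd (l : List (Fin k × Bool)) :
    PiP (F := F) (wordProd k F l) = foldlP F (emptyP k) l := by
  induction l using List.reverseRecOn with
  | nil => simpa using PiP_one
  | append_singleton l α ih =>
    rw [wordProd_append, foldlP_append, wordProd_singleton, PiP_mul_sym, ih]
    rfl

/-! ### Commutation in the group -/

lemma gen_comm {i j : Fin k} (hij : i ≠ j) (hF : s(i, j) ∉ F) :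
    Commute (gen k F i) (gen k F j) := by
  have h1 : PresentedGroup.mk (Rels k F)
      (FreeGroup.of i * FreeGroup.of j * (FreeGroup.of i)⁻¹ * (FreeGroup.of j)⁻¹) = 1 := by
    have hmem : (FreeGroup.of i * FreeGroup.of j * (FreeGroup.of i)⁻¹ * (FreeGroup.of j)⁻¹ :
        FreeGroup (Fin k)) ∈ Subgroup.normalClosure (Rels k F) :=
      Subgroup.subset_normalClosure ⟨i, j, hij, hF, rfl⟩
    exact (QuotientGroup.eq_one_iff _).mpr hmem
  rw [map_mul, map_mul, map_mul, map_inv, map_inv] at h1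
  rw [mul_inv_eq_one] at h1
  rw [mul_inv_eq_iff_eq_mul] at h1
  exact h1

lemma sym_comm {i : Fin k} {b : Bool} {β : Fin k × Bool} (h1 : β.1 ≠ i)
    (h2 : ¬ Nbr F i β.1) : Commute (sym k F (i, b)) (sym k F β) := by
  have hF : s(i, β.1) ∉ F := fun hf => h2 ⟨fun he => h1 he.symm, hf⟩
  have hg : Commute (gen k F i) (gen k F β.1) := gen_comm (fun he => h1 he.symm) hF
  rcases β with ⟨j, c⟩
  simp only at hg ⊢
  cases b <;> cases c <;> simp only [sym]
  · exact hg.inv_left.inv_right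
  · exact hg.inv_left
  · exact hg.inv_right
  · exact hg

lemma wordProd_commute {s : Grp k F} {l} (h : ∀ β ∈ l, Commute s (sym k F β)) :
    s * wordProd k F l = wordProd k F l * s := by
  induction l with
  | nil => simp
  | cons β l ih =>
    rw [wordProd_cons, ← mul_assoc, (h β List.mem_cons_self).eq, mul_assoc,
      ih (fun γ hγ => h γ (List.mem_cons_of_mem β hγ)), mul_assoc]

/-! ### Minimal words are cancel-free; length equals bead count -/

lemma CF_split {l : List (Fin k × Bool)} (P : Piling k) (h : ¬ CF F l P) :
    ∃ u α v, l = u ++ α :: v ∧ CF F u P ∧ cancels (foldlP F P u) α := by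
  induction l generalizing P with
  | nil => exact absurd trivial h
  | cons β l ih =>
    by_cases hc : cancels P β
    · exact ⟨[], β, l, rfl, trivial, hc⟩
    · have : ¬ CF F l (push F P β) := fun hh => h ⟨hc, hh⟩
      obtain ⟨u, α, v, rfl, hcfu, hcan⟩ := ih _ this
      exact ⟨β :: u, α, v, rfl, ⟨hc, hcfu⟩, hcan⟩

lemma CF_of_min {l} {x : Grp k F} (hw : wordProd k F l = x) (hl : l.length = len x) :
    CF F l (emptyP k) := by
  by_contra hncf
  obtain ⟨u, α, v, rfl, hcfu, hcan⟩ := CF_split _ hncf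
  obtain ⟨u₁, u₂, hu, hv2⟩ := lemD hcfu (i := α.1) (c := !α.2) hcan
  have hcomm : ∀ β ∈ u₂, Commute (sym k F (α.1, !α.2)) (sym k F β) := fun β hβ =>
    sym_comm (hv2 β hβ).1 (hv2 β hβ).2
  have hXc := wordProd_commute hcomm
  have hXA : sym k F (α.1, !α.2) * sym k F α = 1 := by
    rw [show ((α.1, !α.2) : Fin k × Bool) = negL α from rfl, sym_negL, inv_mul_cancel]
  have key : wordProd k F (u₁ ++ u₂ ++ v) = x := by
    rw [← hw, hu]
    simp only [wordProd_append, wordProd_cons]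
    have hmain : wordProd k F u₁ * (sym k F (α.1, !α.2) * wordProd k F u₂) *
        (sym k F α * wordProd k F v) = wordProd k F u₁ * wordProd k F u₂ *
        (sym k F (α.1, !α.2) * sym k F α) * wordProd k F v := by
      rw [hXc, ← mul_assoc (wordProd k F u₁) (wordProd k F u₂) (sym k F (α.1, !α.2)),
        ← mul_assoc (wordProd k F u₁ * wordProd k F u₂ * sym k F (α.1, !α.2))
          (sym k F α) (wordProd k F v),
        mul_assoc (wordProd k F u₁ * wordProd k F u₂) (sym k F (α.1, !α.2)) (sym k F α)]
    rw [hmain, hXA, mul_one]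
  have hle := len_le key
  rw [hu] at hl
  simp only [List.length_append, List.length_cons] at hle hl
  omega

lemma len_eq_bc (x : Grp k F) : len x = bc (PiP x) := by
  obtain ⟨l, hw, hl⟩ := exists_minWord x
  have hcf := CF_of_min hw hl
  rw [← hw, PiP_wordProd, bc_foldl_CF hcf, bc_empty, hl, Nat.zero_add, hw]

/-! ### Length dichotomy and first letters -/

lemma len_sym (α : Fin k × Bool) : len (sym k F α) = 1 := by
  have h1 : PiP (sym k F α) = push F (emptyP k) α := by
    rw [← one_mul (sym k F α), PiP_mul_sym, PiP_one]
  have hnc : ¬ cancels (emptyP k) α := by simp [cancels, emptyP]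
  rw [len_eq_bc, h1, bc_push_noncancel hnc, bc_empty]

lemma len_mul_sym_cancel {z : Grp k F} {α} (h : cancels (PiP z) α) :
    len (z * sym k F α) + 1 = len z := by
  have h1 : len (z * sym k F α) = bc (push F (PiP z) α) := by
    rw [len_eq_bc, PiP_mul_sym]
  have h2 := bc_push_cancel (F := F) h
  have h3 : len z ≤ len (z * sym k F α) + 1 := by
    have hz : (z * sym k F α) * sym k F (negL α) = z := by
      rw [sym_negL, mul_inv_cancel_right]
    calc len z = len ((z * sym k F α) * sym k F (negL α)) := by rw [hz]
      _ ≤ len (z * sym k F α) + len (sym k F (negL α)) := len_mul_le _ _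
      _ = len (z * sym k F α) + 1 := by rw [len_sym]
  have h4 : len z = bc (PiP z) := len_eq_bc z
  omega

lemma len_mul_sym_noncancel {z : Grp k F} {α} (h : ¬ cancels (PiP z) α) :
    len (z * sym k F α) = len z + 1 := by
  rw [len_eq_bc, PiP_mul_sym, bc_push_noncancel h, ← len_eq_bc]

lemma le_sym_iff {α} {x : Grp k F} : le (sym k F α) x ↔ cancels (PiP x⁻¹) α := by
  unfold le
  have e1 : len ((sym k F α)⁻¹ * x) = len (x⁻¹ * sym k F α) := by
    rw [← len_inv]
    congr 1
    group
  rw [len_sym, e1]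
  constructor
  · intro h
    by_contra hnc
    have h2 := len_mul_sym_noncancel hnc
    rw [len_inv] at h2
    omega
  · intro h
    have h2 := len_mul_sym_cancel h
    rw [len_inv] at h2
    omega

lemma stmtF2 {A B : Fin k × Bool} {x : Grp k F} (hAB : sym k F A ≠ sym k F B)
    (hA : le (sym k F A) x) (hB : le (sym k F B) x) :
    A.1 ≠ B.1 ∧ ¬ Nbr F A.1 B.1 ∧ Commute (sym k F A) (sym k F B) ∧
      le (sym k F A * sym k F B) x ∧ len (sym k F A * sym k F B) = 2 := by
  have cA := le_sym_iff.mp hA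
  have cB := le_sym_iff.mp hB
  have hne : A.1 ≠ B.1 := by
    intro he
    apply hAB
    have h1 : ((PiP (F := F) x⁻¹) A.1).head? = some (some !A.2) := cA
    have h2 : ((PiP (F := F) x⁻¹) B.1).head? = some (some !B.2) := cB
    rw [he, h2] at h1
    have h3 : A.2 = B.2 := by
      injection h1 with h1
      injection h1 with h1
      exact Bool.not_inj h1.symm
    have : A = B := Prod.ext he h3
    rw [this]
  have hnn : ¬ Nbr F A.1 B.1 := by
    intro hN
    have hh := (good_PiP (F := F) x⁻¹).2 A.1 (!A.2) cA B.1 hN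
    have cB' : ((PiP (F := F) x⁻¹) B.1).head? = some (some !B.2) := cB
    rw [hh] at cB'
    simp at cB'
  have hcomm : Commute (sym k F A) (sym k F B) := by
    have := sym_comm (i := A.1) (b := A.2) (β := B) hne.symm hnn
    simpa using this
  have hPiAB : PiP (sym k F A * sym k F B) = push F (push F (emptyP k) A) B := by
    rw [PiP_mul_sym, ← one_mul (sym k F A), PiP_mul_sym, PiP_one]
  have hncA : ¬ cancels (emptyP k) A := by simp [cancels, emptyP]
  have hncB : ¬ cancels (push F (emptyP k) A) B := by
    unfold cancels
    rw [push_untouched hne.symm hnn]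
    simp [emptyP]
  have hlen2 : len (sym k F A * sym k F B) = 2 := by
    rw [len_eq_bc, hPiAB, bc_push_noncancel hncB, bc_push_noncancel hncA, bc_empty]
  have hcB2 : cancels (PiP (x⁻¹ * sym k F A)) B := by
    unfold cancels
    rw [PiP_mul_sym, push_untouched hne.symm hnn]
    exact cB
  have l1 : len (x⁻¹ * sym k F A) + 1 = len x⁻¹ := len_mul_sym_cancel cA
  have l2 : len ((x⁻¹ * sym k F A) * sym k F B) + 1 = len (x⁻¹ * sym k F A) :=
    len_mul_sym_cancel hcB2
  have e3 : len ((sym k F A * sym k F B)⁻¹ * x) = len (x⁻¹ * sym k F A * sym k F B) := by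
    rw [← len_inv]
    congr 1
    group
  refine ⟨hne, hnn, hcomm, ?_, hlen2⟩
  unfold le
  rw [hlen2, e3]
  rw [len_inv] at l1
  have hle : len (sym k F A) + len ((sym k F A)⁻¹ * x) = len x := hA.symm
  omega

/-! ### Basic order lemmas -/

lemma le_refl' (x : Grp k F) : le x x := by unfold le; simp

lemma le_one_left (x : Grp k F) : le 1 x := by unfold le; simp

lemma le_trans' {x y z : Grp k F} (h1 : le x y) (h2 : le y z) : le x z := by
  unfold le at *
  have t1 : len (x⁻¹ * z) ≤ len (x⁻¹ * y) + len (y⁻¹ * z) := by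
    have e : (x⁻¹ * y) * (y⁻¹ * z) = x⁻¹ * z := by group
    rw [← e]
    exact len_mul_le _ _
  have t2 : len z ≤ len x + len (x⁻¹ * z) := by
    have e : x * (x⁻¹ * z) = z := by group
    calc len z = len (x * (x⁻¹ * z)) := by rw [e]
      _ ≤ _ := len_mul_le _ _
  omega

lemma eq_of_le_of_len_ge {x y : Grp k F} (h1 : le x y) (h2 : len y ≤ len x) : x = y := by
  unfold le at h1
  have h3 : len (x⁻¹ * y) = 0 := by omega
  exact inv_mul_eq_one.mp (eq_one_of_len h3)

lemma len_le_of_le {x y : Grp k F} (h : le x y) : len x ≤ len y := by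
  unfold le at h; omega

lemma le_mul_right {s w m : Grp k F} (h : le w m) (hw : len (s * w) = len s + len w)
    (hm : len (s * m) = len s + len m) : le (s * w) (s * m) := by
  unfold le at *
  have e : (s * w)⁻¹ * (s * m) = w⁻¹ * m := by group
  rw [e, hw, hm]
  omega

lemma le_mul {u v x : Grp k F} (h1 : le u x) (h2 : le v (u⁻¹ * x)) :
    le (u * v) x ∧ len (u * v) = len u + len v := by
  unfold le at *
  have e1 : (u * v)⁻¹ * x = v⁻¹ * (u⁻¹ * x) := by group
  have t1 : len (u * v) ≤ len u + len v := len_mul_le _ _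
  have t2 : len x ≤ len (u * v) + len ((u * v)⁻¹ * x) := by
    have e : (u * v) * ((u * v)⁻¹ * x) = x := by group
    calc len x = len ((u * v) * ((u * v)⁻¹ * x)) := by rw [e]
      _ ≤ _ := len_mul_le _ _
  rw [e1] at t2 ⊢
  exact ⟨by omega, by omega⟩

lemma le_div {u w x : Grp k F} (h1 : le u w) (h2 : le w x) :
    le (u⁻¹ * w) (u⁻¹ * x) := by
  have h3 : le u x := le_trans' h1 h2
  unfold le at *
  have e : (u⁻¹ * w)⁻¹ * (u⁻¹ * x) = w⁻¹ * x := by group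
  have e2 : len (u⁻¹ * w) + len u = len w := by omega
  rw [e]
  omega

lemma exists_letter_le {x : Grp k F} (h : x ≠ 1) : ∃ A, le (sym k F A) x := by
  obtain ⟨l, hw, hl⟩ := exists_minWord x
  cases l with
  | nil => exact absurd (by simpa using hw.symm) h
  | cons A rest =>
    refine ⟨A, ?_⟩
    unfold le
    have hrest : wordProd k F rest = (sym k F A)⁻¹ * x := by
      rw [← hw, wordProd_cons]
      group
    have h1 : len ((sym k F A)⁻¹ * x) ≤ rest.length := len_le hrest
    have h2 : len x ≤ 1 + len ((sym k F A)⁻¹ * x) := by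
      have e : sym k F A * ((sym k F A)⁻¹ * x) = x := by group
      calc len x = len (sym k F A * ((sym k F A)⁻¹ * x)) := by rw [e]
        _ ≤ len (sym k F A) + len ((sym k F A)⁻¹ * x) := len_mul_le _ _
        _ = 1 + len ((sym k F A)⁻¹ * x) := by rw [len_sym]
    rw [len_sym]
    simp only [List.length_cons] at hl
    omega

lemma le_left_of_len2 {A B : Fin k × Bool}
    (h2 : len (sym k F A * sym k F B) = 2) :
    le (sym k F A) (sym k F A * sym k F B) := by
  unfold le
  rw [inv_mul_cancel_left, len_sym, len_sym, h2]

lemma le_right_of_len2 {A B : Fin k × Bool} (hc : Commute (sym k F A) (sym k F B))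
    (h2 : len (sym k F A * sym k F B) = 2) :
    le (sym k F B) (sym k F A * sym k F B) := by
  rw [hc.eq]
  exact le_left_of_len2 (by rw [← hc.eq]; exact h2)

/-- Join of a letter with a lower bound of `x`, inside the lower set of `x`. -/
lemma lemJ : ∀ (n : ℕ) (w x : Grp k F) (A : Fin k × Bool), len w ≤ n →
    le (sym k F A) x → le w x →
    ∃ j, le (sym k F A) j ∧ le w j ∧ (∀ u, le (sym k F A) u → le w u → le j u) ∧
      le j x ∧ len j ≤ len w + 1 := by
  intro n
  induction n with
  | zero =>
    intro w x A hn hAx hwx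
    have hw1 : w = 1 := eq_one_of_len (Nat.le_zero.mp hn)
    subst hw1
    exact ⟨sym k F A, le_refl' _, le_one_left _, fun u hAu _ => hAu, hAx, by
      rw [len_sym]; omega⟩
  | succ n ih =>
    intro w x A hn hAx hwx
    by_cases hAw : le (sym k F A) w
    · exact ⟨w, hAw, le_refl' _, fun u _ h2 => h2, hwx, by omega⟩
    by_cases hw1 : w = 1
    · subst hw1
      exact ⟨sym k F A, le_refl' _, le_one_left _, fun u hAu _ => hAu, hAx, by
        rw [len_sym]; omega⟩
    obtain ⟨B, hBw⟩ := exists_letter_le hw1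
    have hBx : le (sym k F B) x := le_trans' hBw hwx
    have hsymne : sym k F A ≠ sym k F B := by
      intro he
      exact hAw (he ▸ hBw)
    obtain ⟨hne, hnn, hcommAB, hABx, hlenAB⟩ := stmtF2 hsymne hAx hBx
    obtain ⟨_, _, hcommBA, hBAx, hlenBA⟩ := stmtF2 (Ne.symm hsymne) hBx hAx
    have hBBA : le (sym k F B) (sym k F B * sym k F A) := le_left_of_len2 hlenBA
    have hABA : le (sym k F A) (sym k F B * sym k F A) := le_right_of_len2 hcommBA hlenBA
    set w' := (sym k F B)⁻¹ * w with hw'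
    have hw'x' : le w' ((sym k F B)⁻¹ * x) := le_div hBw hwx
    have hA'x' : le (sym k F A) ((sym k F B)⁻¹ * x) := by
      have h0 := le_div hBBA hBAx
      rwa [inv_mul_cancel_left] at h0
    have hnAw' : ¬ le (sym k F A) w' := by
      intro hc
      have hBA_w : le (sym k F B * sym k F A) w := (le_mul hBw hc).1
      exact hAw (le_trans' hABA hBA_w)
    have hlenw : len w = 1 + len w' := by
      have := hBw
      unfold le at this
      rw [len_sym] at this
      rw [hw']
      omega
    have hlenw' : len w' ≤ n := by omega
    obtain ⟨j', hAj', hw'j', hleast', hj'x', hlenj'⟩ :=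
      ih w' ((sym k F B)⁻¹ * x) A hlenw' hA'x' hw'x'
    refine ⟨sym k F B * j', ?_, ?_, ?_, ?_, ?_⟩
    case _ =>
      -- le (sym A) (B * j')
      obtain ⟨hjx, hlenj⟩ := le_mul hBx hj'x'
      have hlenjB : len (sym k F B * j') = 1 + len j' := by rw [hlenj, len_sym]
      have e2 : (sym k F A)⁻¹ * (sym k F B * j') =
          sym k F B * ((sym k F A)⁻¹ * j') := by
        rw [← mul_assoc, hcommAB.inv_left.eq, mul_assoc]
      have t1 : len ((sym k F A)⁻¹ * (sym k F B * j')) ≤ 1 + len ((sym k F A)⁻¹ * j') := by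
        rw [e2]
        calc len (sym k F B * ((sym k F A)⁻¹ * j')) ≤
            len (sym k F B) + len ((sym k F A)⁻¹ * j') := len_mul_le _ _
          _ = 1 + _ := by rw [len_sym]
      have t2 : len (sym k F B * j') ≤ len (sym k F A) +
          len ((sym k F A)⁻¹ * (sym k F B * j')) := by
        have e : sym k F A * ((sym k F A)⁻¹ * (sym k F B * j')) = sym k F B * j' := by
          group
        conv_lhs => rw [← e]
        exact len_mul_le _ _
      have hAj'e := hAj'
      unfold le at hAj'e ⊢
      rw [len_sym] at hAj'e t2 ⊢
      omega
    case _ =>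
      -- le w (B * j')
      obtain ⟨hjx, hlenj⟩ := le_mul hBx hj'x'
      have hlenjB : len (sym k F B * j') = len (sym k F B) + len j' := by
        rw [hlenj]
      have hlw : len (sym k F B * w') = len (sym k F B) + len w' := by
        have e : sym k F B * w' = w := by rw [hw']; group
        rw [e, len_sym]
        omega
      have h0 := le_mul_right hw'j' hlw hlenjB
      have e : sym k F B * w' = w := by rw [hw']; group
      rwa [e] at h0
    case _ =>
      intro u hAu hwu
      have hBu : le (sym k F B) u := le_trans' hBw hwu
      have hw'u : le w' ((sym k F B)⁻¹ * u) := le_div hBw hwu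
      obtain ⟨_, _, _, hBAu, _⟩ := stmtF2 (Ne.symm hsymne) hBu hAu
      have hAu' : le (sym k F A) ((sym k F B)⁻¹ * u) := by
        have h0 := le_div hBBA hBAu
        rwa [inv_mul_cancel_left] at h0
      have hj'u := hleast' _ hAu' hw'u
      obtain ⟨hjx, hlenj⟩ := le_mul hBx hj'x'
      have l1 : len (sym k F B * j') = len (sym k F B) + len j' := by rw [hlenj]
      have l2 : len (sym k F B * ((sym k F B)⁻¹ * u)) =
          len (sym k F B) + len ((sym k F B)⁻¹ * u) := by
        rw [mul_inv_cancel_left, len_sym]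
        have := hBu
        unfold le at this
        rw [len_sym] at this
        omega
      have h0 := le_mul_right hj'u l1 l2
      rwa [mul_inv_cancel_left] at h0
    case _ => exact (le_mul hBx hj'x').1
    case _ =>
      have hlenj : len (sym k F B * j') = 1 + len j' := by
        rw [(le_mul hBx hj'x').2, len_sym]
      omega

/-- Binary meets (greatest lower bounds) exist. -/
lemma exists_meet : ∀ (n : ℕ) (x y : Grp k F), len x + len y ≤ n →
    ∃ m, le m x ∧ le m y ∧ ∀ w, le w x → le w y → le w m := by
  intro n
  induction n with
  | zero =>
    intro x y hn
    refine ⟨1, le_one_left _, le_one_left _, fun w hwx hwy => ?_⟩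
    have hx : x = 1 := eq_one_of_len (by omega)
    subst hx
    have hw : w = 1 := by
      have h1 := len_le_of_le hwx
      exact eq_one_of_len (by simp at h1 ⊢; omega)
    subst hw
    exact le_refl' 1
  | succ n ih =>
    intro x y hn
    by_cases hc : ∃ A, le (sym k F A) x ∧ le (sym k F A) y
    · obtain ⟨A, hAx, hAy⟩ := hc
      have hx1 : len ((sym k F A)⁻¹ * x) + 1 = len x := by
        have := hAx; unfold le at this; rw [len_sym] at this; omega
      have hy1 : len ((sym k F A)⁻¹ * y) + 1 = len y := by
        have := hAy; unfold le at this; rw [len_sym] at this; omega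
      obtain ⟨m', hm'x, hm'y, hm'glb⟩ :=
        ih ((sym k F A)⁻¹ * x) ((sym k F A)⁻¹ * y) (by omega)
      obtain ⟨hmx, hlenm⟩ := le_mul hAx hm'x
      have hmy : le (sym k F A * m') y := (le_mul hAy hm'y).1
      refine ⟨sym k F A * m', hmx, hmy, fun w hwx hwy => ?_⟩
      obtain ⟨j, hAj, hwj, hleast, hjx, _⟩ :=
        lemJ (len w) w x A le_rfl hAx hwx
      have hjy : le j y := hleast y hAy hwy
      have hj'x := le_div hAj hjx
      have hj'y := le_div hAj hjy
      have hj'm' := hm'glb _ hj'x hj'y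
      have l1 : len (sym k F A * ((sym k F A)⁻¹ * j)) =
          len (sym k F A) + len ((sym k F A)⁻¹ * j) := by
        rw [mul_inv_cancel_left, len_sym]
        have := hAj; unfold le at this; rw [len_sym] at this; omega
      have l2 : len (sym k F A * m') = len (sym k F A) + len m' := by
        rw [hlenm]
      have h0 := le_mul_right hj'm' l1 l2
      rw [mul_inv_cancel_left] at h0
      exact le_trans' hwj h0
    · refine ⟨1, le_one_left _, le_one_left _, fun w hwx hwy => ?_⟩
      by_cases hw1 : w = 1
      · subst hw1; exact le_refl' 1
      · obtain ⟨A, hAw⟩ := exists_letter_le hw1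
        exact absurd ⟨A, le_trans' hAw hwx, le_trans' hAw hwy⟩ hc

/-- Least upper bound of a list of elements, given some common upper bound. -/
lemma exists_lub {L : List (Grp k F)} (hub : ∃ w, ∀ z ∈ L, le z w) :
    ∃ j, (∀ z ∈ L, le z j) ∧ ∀ w, (∀ z ∈ L, le z w) → le j w := by
  have hS : {n | ∃ w, (∀ z ∈ L, le z w) ∧ len w = n}.Nonempty := by
    obtain ⟨w, hw⟩ := hub
    exact ⟨len w, w, hw, rfl⟩
  obtain ⟨w0, hw0, hw0len⟩ := Nat.sInf_mem hS
  refine ⟨w0, hw0, ?_⟩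
  intro w hw
  obtain ⟨d, hdw0, hdw, hdglb⟩ := exists_meet (len w0 + len w) w0 w le_rfl
  have hdub : ∀ z ∈ L, le z d := fun z hz => hdglb z (hw0 z hz) (hw z hz)
  have h1 : len w0 ≤ len d := by
    rw [hw0len]
    exact Nat.sInf_le ⟨d, hdub, rfl⟩
  have h2 : d = w0 := eq_of_le_of_len_ge hdw0 h1
  rw [← h2]
  exact hdw

/-- Removing an absent minimal letter from above. -/
lemma lemK1 : ∀ (n : ℕ) (s j : Grp k F) (B : Fin k × Bool), len s ≤ n →
    le (sym k F B) j → le s j → ¬ le (sym k F B) s →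
    le s ((sym k F B)⁻¹ * j) := by
  intro n
  induction n with
  | zero =>
    intro s j B hn _ _ _
    have hs : s = 1 := eq_one_of_len (by omega)
    subst hs
    exact le_one_left _
  | succ n ih =>
    intro s j B hn hBj hsj hnBs
    by_cases hs1 : s = 1
    · subst hs1; exact le_one_left _
    obtain ⟨C, hCs⟩ := exists_letter_le hs1
    have hCj : le (sym k F C) j := le_trans' hCs hsj
    have hsymne : sym k F B ≠ sym k F C := fun he => hnBs (he ▸ hCs)
    obtain ⟨hne, hnn, hcommBC, hBCj, hlenBC⟩ := stmtF2 hsymne hBj hCj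
    obtain ⟨_, _, hcommCB, hCBj, hlenCB⟩ := stmtF2 (Ne.symm hsymne) hCj hBj
    set s' := (sym k F C)⁻¹ * s with hs'def
    have hs'j1 : le s' ((sym k F C)⁻¹ * j) := le_div hCs hsj
    have hCCB : le (sym k F C) (sym k F C * sym k F B) := le_left_of_len2 hlenCB
    have hBCj' : le (sym k F B) ((sym k F C)⁻¹ * j) := by
      have h0 := le_div hCCB hCBj
      rwa [inv_mul_cancel_left] at h0
    have hnBs' : ¬ le (sym k F B) s' := by
      intro hcon
      have h1 : le (sym k F C * sym k F B) s := (le_mul hCs hcon).1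
      have h2 : le (sym k F B) (sym k F C * sym k F B) := le_right_of_len2 hcommCB hlenCB
      exact hnBs (le_trans' h2 h1)
    have hlens : len s = 1 + len s' := by
      have h4 := hCs; unfold le at h4; rw [len_sym] at h4
      rw [hs'def]
      omega
    have hIH := ih s' ((sym k F C)⁻¹ * j) B (by omega) hBCj' hs'j1 hnBs'
    have hCBj2 : le (sym k F C) ((sym k F B)⁻¹ * j) := by
      have h0 := le_div (le_left_of_len2 hlenBC) hBCj
      rwa [inv_mul_cancel_left] at h0
    have e : sym k F C * ((sym k F B)⁻¹ * ((sym k F C)⁻¹ * j)) = (sym k F B)⁻¹ * j := by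
      rw [← mul_assoc, ← hcommBC.inv_left.eq, mul_assoc, mul_inv_cancel_left]
    have e2 : (sym k F C)⁻¹ * ((sym k F B)⁻¹ * j) =
        (sym k F B)⁻¹ * ((sym k F C)⁻¹ * j) := by
      rw [← mul_assoc, ← hcommBC.inv_left.inv_right.eq, mul_assoc]
    have e3 : sym k F C * s' = s := by rw [hs'def, mul_inv_cancel_left]
    have l1 : len (sym k F C * s') = len (sym k F C) + len s' := by
      rw [e3, len_sym]
      omega
    have l2 : len (sym k F C * ((sym k F B)⁻¹ * ((sym k F C)⁻¹ * j))) =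
        len (sym k F C) + len ((sym k F B)⁻¹ * ((sym k F C)⁻¹ * j)) := by
      rw [e, len_sym]
      have h3 := hCBj2
      unfold le at h3
      rw [len_sym, e2] at h3
      omega
    have h0 := le_mul_right hIH l1 l2
    rw [e3, e] at h0
    exact h0

/-- Two elements are bounded above. -/
def Bd (x y : Grp k F) : Prop := ∃ w, le x w ∧ le y w

lemma Bd.symm' {x y : Grp k F} (h : Bd x y) : Bd y x := by
  obtain ⟨w, h1, h2⟩ := h
  exact ⟨w, h2, h1⟩

lemma ne_one_of_two_le_len {a : Grp k F} (h : 2 ≤ len a) : a ≠ 1 := by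
  intro h1
  rw [h1, len_one] at h
  omega

lemma t3_base {a b c : Grp k F} (ha : len a ≤ 1) (hb : len b ≤ 1) (hc : len c ≤ 1)
    (hab : Bd a b) (hac : Bd a c) (hbc : Bd b c) :
    ∃ w, le a w ∧ le b w ∧ le c w := by
  by_cases ha0 : a = 1
  · obtain ⟨w, h1, h2⟩ := hbc
    exact ⟨w, ha0 ▸ le_one_left w, h1, h2⟩
  by_cases hb0 : b = 1
  · obtain ⟨w, h1, h2⟩ := hac
    exact ⟨w, h1, hb0 ▸ le_one_left w, h2⟩
  by_cases hc0 : c = 1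
  · obtain ⟨w, h1, h2⟩ := hab
    exact ⟨w, h1, h2, hc0 ▸ le_one_left w⟩
  by_cases hab' : a = b
  · obtain ⟨w, h1, h2⟩ := hac
    exact ⟨w, h1, hab' ▸ h1, h2⟩
  by_cases hac' : a = c
  · obtain ⟨w, h1, h2⟩ := hab
    exact ⟨w, h1, h2, hac' ▸ h1⟩
  by_cases hbc' : b = c
  · obtain ⟨w, h1, h2⟩ := hab
    exact ⟨w, h1, h2, hbc' ▸ h2⟩
  obtain ⟨A, hA⟩ := exists_letter_le ha0
  obtain ⟨B, hB⟩ := exists_letter_le hb0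
  obtain ⟨C, hC⟩ := exists_letter_le hc0
  have haA : sym k F A = a := eq_of_le_of_len_ge hA (by rw [len_sym]; omega)
  have hbB : sym k F B = b := eq_of_le_of_len_ge hB (by rw [len_sym]; omega)
  have hcC : sym k F C = c := eq_of_le_of_len_ge hC (by rw [len_sym]; omega)
  obtain ⟨wab, hab1, hab2⟩ := hab
  obtain ⟨wac, hac1, hac2⟩ := hac
  obtain ⟨wbc, hbc1, hbc2⟩ := hbc
  have hABne : sym k F A ≠ sym k F B := by rw [haA, hbB]; exact hab'
  have hACne : sym k F A ≠ sym k F C := by rw [haA, hcC]; exact hac'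
  have hBCne : sym k F B ≠ sym k F C := by rw [hbB, hcC]; exact hbc'
  obtain ⟨hne1, hnn1, hcomm1, _, hlen1⟩ :=
    stmtF2 hABne (haA ▸ hab1) (hbB ▸ hab2)
  obtain ⟨hne2, hnn2, hcomm2, _, hlen2⟩ :=
    stmtF2 hACne (haA ▸ hac1) (hcC ▸ hac2)
  obtain ⟨hne3, hnn3, hcomm3, _, hlen3⟩ :=
    stmtF2 hBCne (hbB ▸ hbc1) (hcC ▸ hbc2)
  -- w := sym A * sym B * sym C
  have hPiAB : PiP (sym k F A * sym k F B) = push F (push F (emptyP k) A) B := by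
    rw [PiP_mul_sym, ← one_mul (sym k F A), PiP_mul_sym, PiP_one]
  have hncC : ¬ cancels (PiP (sym k F A * sym k F B)) C := by
    unfold cancels
    rw [hPiAB, push_untouched hne3.symm hnn3, push_untouched hne2.symm hnn2]
    simp [emptyP]
  have hlenw : len (sym k F A * sym k F B * sym k F C) = 3 := by
    rw [len_mul_sym_noncancel hncC, hlen1]
  refine ⟨sym k F A * sym k F B * sym k F C, ?_, ?_, ?_⟩
  · rw [← haA]
    unfold le
    have e : (sym k F A)⁻¹ * (sym k F A * sym k F B * sym k F C) =
        sym k F B * sym k F C := by group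
    rw [e, hlenw, len_sym, hlen3]
  · rw [← hbB]
    unfold le
    have e : (sym k F B)⁻¹ * (sym k F A * sym k F B * sym k F C) =
        sym k F A * sym k F C := by
      rw [hcomm1.eq]
      group
    rw [e, hlenw, len_sym, hlen2]
  · rw [← hcC]
    unfold le
    have e : (sym k F C)⁻¹ * (sym k F A * sym k F B * sym k F C) =
        sym k F A * sym k F B := by
      have hcx : Commute (sym k F C) (sym k F A * sym k F B) :=
        (hcomm2.symm).mul_right (hcomm3.symm)
      rw [← hcx.eq, inv_mul_cancel_left]
    rw [e, hlenw, len_sym, hlen1]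

lemma ub2 {z1 z2 w : Grp k F} (h1 : le z1 w) (h2 : le z2 w) :
    ∀ z ∈ [z1, z2], le z w := by
  intro z hz
  simp only [List.mem_cons, List.not_mem_nil, or_false] at hz
  rcases hz with rfl | rfl
  exacts [h1, h2]

lemma ub3 {z1 z2 z3 w : Grp k F} (h1 : le z1 w) (h2 : le z2 w) (h3 : le z3 w) :
    ∀ z ∈ [z1, z2, z3], le z w := by
  intro z hz
  simp only [List.mem_cons, List.not_mem_nil, or_false] at hz
  rcases hz with rfl | rfl | rfl
  exacts [h1, h2, h3]

lemma t3_strip {n : ℕ}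
    (IH : ∀ a b c : Grp k F, len a + len b + len c ≤ n →
      Bd a b → Bd a c → Bd b c → ∃ w, le a w ∧ le b w ∧ le c w)
    {a b c : Grp k F} (h2 : 2 ≤ len a) (hsum : len a + len b + len c ≤ n + 1)
    (hab : Bd a b) (hac : Bd a c) (hbc : Bd b c) :
    ∃ w, le a w ∧ le b w ∧ le c w := by
  obtain ⟨A, hAa⟩ := exists_letter_le (ne_one_of_two_le_len h2)
  obtain ⟨wab, hab1, hab2⟩ := hab
  obtain ⟨wac, hac1, hac2⟩ := hac
  obtain ⟨wbc, hbc1, hbc2⟩ := hbc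
  have hAwab : le (sym k F A) wab := le_trans' hAa hab1
  have hAwac : le (sym k F A) wac := le_trans' hAa hac1
  obtain ⟨u, hu1, hu2, hu3⟩ := IH (sym k F A) b c
    (by rw [len_sym]; omega)
    ⟨wab, hAwab, hab2⟩ ⟨wac, hAwac, hac2⟩ ⟨wbc, hbc1, hbc2⟩
  obtain ⟨bh, hbh1, hbh2⟩ := exists_lub (L := [sym k F A, b]) ⟨wab, ub2 hAwab hab2⟩
  have hAbh : le (sym k F A) bh := hbh1 _ (by simp)
  have hbbh : le b bh := hbh1 _ (by simp)
  obtain ⟨ch, hch1, hch2⟩ := exists_lub (L := [sym k F A, c]) ⟨wac, ub2 hAwac hac2⟩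
  have hAch : le (sym k F A) ch := hch1 _ (by simp)
  have hcch : le c ch := hch1 _ (by simp)
  obtain ⟨jb, hjb1, hjb2, hjbl, _, hjblen⟩ := lemJ (len b) b wab A le_rfl hAwab hab2
  have hlenbh : len bh ≤ len b + 1 :=
    le_trans (len_le_of_le (hbh2 jb (ub2 hjb1 hjb2))) hjblen
  obtain ⟨jc, hjc1, hjc2, hjcl, _, hjclen⟩ := lemJ (len c) c wac A le_rfl hAwac hac2
  have hlench : len ch ≤ len c + 1 :=
    le_trans (len_le_of_le (hch2 jc (ub2 hjc1 hjc2))) hjclen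
  have hbhu : le bh u := hbh2 u (ub2 hu1 hu2)
  have hchu : le ch u := hch2 u (ub2 hu1 hu3)
  have hbd1 : Bd ((sym k F A)⁻¹ * a) ((sym k F A)⁻¹ * bh) :=
    ⟨(sym k F A)⁻¹ * wab, le_div hAa hab1, le_div hAbh (hbh2 wab (ub2 hAwab hab2))⟩
  have hbd2 : Bd ((sym k F A)⁻¹ * a) ((sym k F A)⁻¹ * ch) :=
    ⟨(sym k F A)⁻¹ * wac, le_div hAa hac1, le_div hAch (hch2 wac (ub2 hAwac hac2))⟩
  have hbd3 : Bd ((sym k F A)⁻¹ * bh) ((sym k F A)⁻¹ * ch) :=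
    ⟨(sym k F A)⁻¹ * u, le_div hAbh hbhu, le_div hAch hchu⟩
  have hla : len ((sym k F A)⁻¹ * a) + 1 = len a := by
    have h0 := hAa; unfold le at h0; rw [len_sym] at h0; omega
  have hlb : len ((sym k F A)⁻¹ * bh) + 1 = len bh := by
    have h0 := hAbh; unfold le at h0; rw [len_sym] at h0; omega
  have hlc : len ((sym k F A)⁻¹ * ch) + 1 = len ch := by
    have h0 := hAch; unfold le at h0; rw [len_sym] at h0; omega
  obtain ⟨w'', hw1, hw2, hw3⟩ := IH ((sym k F A)⁻¹ * a) ((sym k F A)⁻¹ * bh)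
    ((sym k F A)⁻¹ * ch) (by omega) hbd1 hbd2 hbd3
  obtain ⟨j', hj'1, hj'2⟩ := exists_lub
    (L := [(sym k F A)⁻¹ * a, (sym k F A)⁻¹ * bh, (sym k F A)⁻¹ * ch])
    ⟨w'', ub3 hw1 hw2 hw3⟩
  have hj'a : le ((sym k F A)⁻¹ * a) j' := hj'1 _ (by simp)
  have hj'b : le ((sym k F A)⁻¹ * bh) j' := hj'1 ((sym k F A)⁻¹ * bh) (by simp)
  have hj'c : le ((sym k F A)⁻¹ * ch) j' := hj'1 ((sym k F A)⁻¹ * ch) (by simp)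
  have key : ∀ s : Grp k F, le (sym k F A) s →
      ¬ le (sym k F (negL A)) ((sym k F A)⁻¹ * s) := by
    intro s hAs hcon
    have h1 := hcon
    unfold le at h1
    rw [len_sym] at h1
    have e : (sym k F (negL A))⁻¹ * ((sym k F A)⁻¹ * s) = s := by
      rw [sym_negL, inv_inv, mul_inv_cancel_left]
    rw [e] at h1
    have h3 := hAs
    unfold le at h3
    rw [len_sym] at h3
    omega
  have hnja : ¬ le (sym k F (negL A)) j' := by
    intro hcon
    have k1 := lemK1 _ ((sym k F A)⁻¹ * a) j' (negL A) le_rfl hcon hj'a (key a hAa)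
    have k2 := lemK1 _ ((sym k F A)⁻¹ * bh) j' (negL A) le_rfl hcon hj'b (key bh hAbh)
    have k3 := lemK1 _ ((sym k F A)⁻¹ * ch) j' (negL A) le_rfl hcon hj'c (key ch hAch)
    have hle := hj'2 _ (ub3 k1 k2 k3)
    have h1 := hcon
    unfold le at h1
    rw [len_sym] at h1
    have h3 := len_le_of_le hle
    omega
  have hlenAj : len (sym k F A * j') = len (sym k F A) + len j' := by
    have e : (sym k F A * j')⁻¹ = j'⁻¹ * sym k F (negL A) := by
      rw [sym_negL, mul_inv_rev]
    have hnc : ¬ cancels (PiP (j'⁻¹)) (negL A) := fun hcc => hnja (le_sym_iff.mpr hcc)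
    have h1 := len_mul_sym_noncancel hnc
    rw [len_sym]
    calc len (sym k F A * j') = len ((sym k F A * j')⁻¹) := (len_inv _).symm
      _ = len (j'⁻¹ * sym k F (negL A)) := by rw [e]
      _ = len j'⁻¹ + 1 := h1
      _ = 1 + len j' := by rw [len_inv]; omega
  have ea : sym k F A * ((sym k F A)⁻¹ * a) = a := mul_inv_cancel_left _ _
  refine ⟨sym k F A * j', ?_, ?_, ?_⟩
  · have la1 : len (sym k F A * ((sym k F A)⁻¹ * a)) =
        len (sym k F A) + len ((sym k F A)⁻¹ * a) := by
      rw [ea, len_sym]; omega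
    have h0 := le_mul_right hj'a la1 hlenAj
    rwa [ea] at h0
  · have eb : sym k F A * ((sym k F A)⁻¹ * bh) = bh := mul_inv_cancel_left _ _
    have lb1 : len (sym k F A * ((sym k F A)⁻¹ * bh)) =
        len (sym k F A) + len ((sym k F A)⁻¹ * bh) := by
      rw [eb, len_sym]; omega
    have h0 := le_mul_right hj'b lb1 hlenAj
    rw [eb] at h0
    exact le_trans' hbbh h0
  · have ec : sym k F A * ((sym k F A)⁻¹ * ch) = ch := mul_inv_cancel_left _ _
    have lc1 : len (sym k F A * ((sym k F A)⁻¹ * ch)) =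
        len (sym k F A) + len ((sym k F A)⁻¹ * ch) := by
      rw [ec, len_sym]; omega
    have h0 := le_mul_right hj'c lc1 hlenAj
    rw [ec] at h0
    exact le_trans' hcch h0

/-- Triple Helly property. -/
lemma t3 : ∀ (n : ℕ) (a b c : Grp k F), len a + len b + len c ≤ n →
    Bd a b → Bd a c → Bd b c → ∃ w, le a w ∧ le b w ∧ le c w := by
  intro n
  induction n with
  | zero =>
    intro a b c hsum hab hac hbc
    exact t3_base (by omega) (by omega) (by omega) hab hac hbc
  | succ n ih =>
    intro a b c hsum hab hac hbc
    by_cases h2a : 2 ≤ len a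
    · exact t3_strip ih h2a hsum hab hac hbc
    by_cases h2b : 2 ≤ len b
    · obtain ⟨w, h1, h2, h3⟩ := t3_strip ih h2b (by omega) hab.symm' hbc hac
      exact ⟨w, h2, h1, h3⟩
    by_cases h2c : 2 ≤ len c
    · obtain ⟨w, h1, h2, h3⟩ := t3_strip ih h2c (by omega) hac.symm' hbc.symm' hab
      exact ⟨w, h2, h3, h1⟩
    · exact t3_base (by omega) (by omega) (by omega) hab hac hbc

/-- Any finite pairwise-bounded family has a common upper bound. -/
lemma famUB : ∀ (n : ℕ) (L : List (Grp k F)), L.length ≤ n →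
    (∀ p ∈ L, ∀ q ∈ L, Bd p q) → ∃ w, ∀ z ∈ L, le z w := by
  intro n
  induction n with
  | zero =>
    intro L hL _
    have h0 : L = [] := List.length_eq_zero_iff.mp (by omega)
    subst h0
    exact ⟨1, by simp⟩
  | succ n ih =>
    intro L hL hpw
    cases L with
    | nil => exact ⟨1, by simp⟩
    | cons z L =>
      have hch : ∀ x (_ : x ∈ L), ∃ j, le x j ∧ le z j ∧
          ∀ w, le x w → le z w → le j w := by
        intro x hx
        have hbd : Bd x z := hpw x (List.mem_cons_of_mem z hx) z List.mem_cons_self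
        obtain ⟨w0, h1, h2⟩ := hbd
        obtain ⟨j, hj1, hj2⟩ := exists_lub (L := [x, z]) ⟨w0, ub2 h1 h2⟩
        exact ⟨j, hj1 _ (by simp), hj1 _ (by simp), fun w hxw hzw => hj2 w (ub2 hxw hzw)⟩
      choose f hf1 hf2 hf3 using hch
      have hpw' : ∀ p ∈ L.attach.map (fun p => f p.1 p.2),
          ∀ q ∈ L.attach.map (fun p => f p.1 p.2), Bd p q := by
        intro p hp q hq
        obtain ⟨⟨xx, hxx⟩, _, rfl⟩ := List.mem_map.mp hp
        obtain ⟨⟨yy, hyy⟩, _, rfl⟩ := List.mem_map.mp hq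
        have hxz : Bd xx z := hpw xx (List.mem_cons_of_mem z hxx) z List.mem_cons_self
        have hyz : Bd yy z := hpw yy (List.mem_cons_of_mem z hyy) z List.mem_cons_self
        have hxy : Bd xx yy := hpw xx (List.mem_cons_of_mem z hxx) yy
          (List.mem_cons_of_mem z hyy)
        obtain ⟨w, hw1, hw2, hw3⟩ := t3 (len xx + len yy + len z) xx yy z le_rfl
          hxy hxz hyz
        exact ⟨w, hf3 xx hxx w hw1 hw3, hf3 yy hyy w hw2 hw3⟩
      have hlen' : (L.attach.map (fun p => f p.1 p.2)).length ≤ n := by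
        simp only [List.length_map, List.length_attach]
        simp only [List.length_cons] at hL
        omega
      obtain ⟨w, hw⟩ := ih _ hlen' hpw'
      have hmemf : ∀ xx (hxx : xx ∈ L), f xx hxx ∈ L.attach.map (fun p => f p.1 p.2) :=
        fun xx hxx => List.mem_map.mpr ⟨⟨xx, hxx⟩, List.mem_attach _ _, rfl⟩
      by_cases hL0 : L = []
      · subst hL0
        exact ⟨z, by
          intro y hy
          simp only [List.mem_singleton] at hy
          rw [hy]
          exact le_refl' z⟩
      · obtain ⟨x0, hx0⟩ := List.exists_mem_of_ne_nil L hL0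
        refine ⟨w, ?_⟩
        intro y hy
        rcases List.mem_cons.mp hy with rfl | hy'
        · exact le_trans' (hf2 x0 hx0) (hw _ (hmemf x0 hx0))
        · exact le_trans' (hf1 y hy') (hw _ (hmemf y hy'))

end Aux

/-- if `xᵢ ∨ xⱼ` is finite for all `i, j`, then
`x₁ ∨ ⋯ ∨ xₜ` is finite. -/
theorem stmt4 {k : ℕ} (hk : 1 ≤ k) {F : Set (Sym2 (Fin k))}
    (t : ℕ) (ht : 1 ≤ t) (x : Fin t → Grp k F)
    (h : ∀ i j, ∃ s, IsJoin (x i) (x j) s) :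
    ∃ s, IsJoinSet (Set.range x) s := by
  classical
  have hpw : ∀ p ∈ (List.finRange t).map x, ∀ q ∈ (List.finRange t).map x, Bd p q := by
    intro p hp q hq
    obtain ⟨i, _, rfl⟩ := List.mem_map.mp hp
    obtain ⟨j, _, rfl⟩ := List.mem_map.mp hq
    obtain ⟨s, hs⟩ := h i j
    exact ⟨s, hs.1, hs.2.1⟩
  obtain ⟨w, hw⟩ := famUB ((List.finRange t).map x).length _ le_rfl hpw
  obtain ⟨j, hj1, hj2⟩ := exists_lub ⟨w, hw⟩
  refine ⟨j, ?_, ?_⟩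
  · rintro s ⟨i, rfl⟩
    exact hj1 (x i) (List.mem_map.mpr ⟨i, List.mem_finRange i, rfl⟩)
  · intro w' hw'
    apply hj2
    intro zz hzz
    obtain ⟨i, _, rfl⟩ := List.mem_map.mp hzz
    exact hw' (x i) ⟨i, rfl⟩

end GraphGroupPaper
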